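/- An infinite countable locally finite group G admits a proper left invariant metric d_G with asdim_AN(G, d_G) > 0; equivalently, a countable locally finite group G is finite if and only if asdim_AN(G, d_G) = 0 for every proper left invariant metric d_G on G. -/

import Mathlib

def ScaleChain {X : Type*} (d : X → X → ℝ) (s : ℝ) (U : Set X) (x y : X) : Prop :=
  ∃ (m : ℕ) (c : ℕ → X), c 0 = x ∧ c m = y ∧ (∀ i ≤ m, c i ∈ U) ∧
    ∀ i < m, d (c i) (c (i + 1)) < s

def IsControlFun {X : Type*} (d : X → X → ℝ) (n : ℕ) (D : ℝ → ℝ) : Prop :=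
  ∀ s : ℝ, 0 < s → ∃ U : Fin (n + 1) → Set X,
    (∀ x, ∃ i, x ∈ U i) ∧ ∀ i x y, ScaleChain d s (U i) x y → d x y ≤ D s

/-- Asymptotic Assouad-Nagata dimension at most `n`. -/
def ANdimLE {X : Type*} (d : X → X → ℝ) (n : ℕ) : Prop :=
  ∃ C : ℝ, 0 < C ∧ ∃ b : ℝ, IsControlFun d n (fun s => C * s + b)

/-- Asymptotic dimension at most `n`. -/
def AsdimLE {X : Type*} (d : X → X → ℝ) (n : ℕ) : Prop :=
  ∃ D : ℝ → ℝ, IsControlFun d n D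

/-- `d` is a proper left invariant metric on the group `G`. -/
def IsPLIMetric {G : Type*} [Group G] (d : G → G → ℝ) : Prop :=
  (∀ x y : G, d x y = 0 ↔ x = y) ∧ (∀ x y : G, d x y = d y x) ∧
    (∀ x y z : G, d x z ≤ d x y + d y z) ∧
    (∀ g x y : G, d (g * x) (g * y) = d x y) ∧
    ∀ K : ℝ, {g : G | d 1 g ≤ K}.Finite

/-- A group is locally finite if every finitely generated subgroup is finite. -/
def LocallyFiniteGroup (G : Type*) [Group G] : Prop :=
  ∀ s : Finset G, ((Subgroup.closure (s : Set G) : Subgroup G) : Set G).Finite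

section ANAux

open Subgroup



private lemma aux_five_pow (E : ℕ) : E * (E + 2) < 5 ^ E := by
  induction E with
  | zero => norm_num
  | succ k ih =>
    rcases Nat.eq_zero_or_pos k with rfl | hk
    · norm_num
    · have h5 : (5:ℕ) ^ (k+1) = 5 * 5 ^ k := by ring
      rw [h5]
      nlinarith [ih, hk]

private lemma aux_polyexp (c E : ℕ) : ∃ X : ℕ, 1 ≤ X ∧ (c + 4 * X) ^ E < 2 ^ X := by
  refine ⟨(c + 5) ^ (E + 1), Nat.one_le_iff_ne_zero.mpr (by positivity), ?_⟩
  rcases Nat.eq_zero_or_pos E with rfl | hE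
  · simpa using Nat.one_lt_two_pow (n := (c + 5) ^ (0 + 1)) (by positivity)
  · have hX1 : 1 ≤ (c + 5) ^ (E + 1) := Nat.one_le_iff_ne_zero.mpr (by positivity)
    calc (c + 4 * (c + 5) ^ (E + 1)) ^ E
        ≤ ((c + 5) * (c + 5) ^ (E + 1)) ^ E := by
          apply Nat.pow_le_pow_left
          nlinarith [hX1]
      _ = (c + 5) ^ ((E + 2) * E) := by rw [← pow_succ', pow_mul]
      _ < (2 ^ (c + 5)) ^ ((E + 2) * E) := by
          apply Nat.pow_lt_pow_left Nat.lt_two_pow_self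
          positivity
      _ = 2 ^ ((c + 5) * ((E + 2) * E)) := by rw [← pow_mul]
      _ ≤ 2 ^ ((c + 5) ^ (E + 1)) := by
          apply Nat.pow_le_pow_right (by norm_num)
          have h1 : (E + 2) * E ≤ (c + 5) ^ E := by
            have h0 := aux_five_pow E
            have h2 : (5:ℕ) ^ E ≤ (c + 5) ^ E := Nat.pow_le_pow_left (by omega) _
            calc (E + 2) * E = E * (E + 2) := by ring
              _ ≤ 5 ^ E := h0.le
              _ ≤ (c + 5) ^ E := h2
          calc (c + 5) * ((E + 2) * E) ≤ (c + 5) * (c + 5) ^ E :=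
                Nat.mul_le_mul_left _ (by omega)
            _ = (c + 5) ^ (E + 1) := (pow_succ' _ _).symm

private def ww : ℕ → ℕ
  | 0 => 1
  | n + 1 => (n + 2) * (ww n + 1)

private lemma ww_ge (n : ℕ) : n + 1 ≤ ww n := by
  induction n with
  | zero => simp [ww]
  | succ k ih => show k + 2 ≤ (k + 2) * (ww k + 1); nlinarith

private lemma ww_lt_succ (n : ℕ) : n * ww n < ww (n + 1) := by
  show n * ww n < (n + 2) * (ww n + 1)
  nlinarith [ww_ge n]

private lemma ww_mono : Monotone ww := by
  apply monotone_nat_of_le_succ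
  intro n
  have := ww_lt_succ n
  show ww n ≤ (n + 2) * (ww n + 1)
  nlinarith

variable {G : Type*} [Group G]

private lemma aux_gen [Infinite G] (hLF : LocallyFiniteGroup G) (X : ℕ) :
    ∃ B : Finset G, B.card ≤ X ∧
      2 ^ X ≤ ((Subgroup.closure ((B : Finset G) : Set G) : Subgroup G) : Set G).ncard := by
  induction X with
  | zero =>
    refine ⟨∅, le_rfl, ?_⟩
    have h1 : (1:G) ∈ ((Subgroup.closure (((∅ : Finset G) : Set G)) : Subgroup G) : Set G) :=
      one_mem _
    have hpos := (Set.ncard_pos (hLF ∅)).mpr ⟨1, h1⟩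
    simpa using hpos
  | succ X ih =>
    classical
    obtain ⟨B, hBcard, hBle⟩ := ih
    have hHfin : ((Subgroup.closure ((B : Finset G) : Set G) : Subgroup G) : Set G).Finite :=
      hLF B
    obtain ⟨x, hx⟩ : ∃ x : G, x ∉ Subgroup.closure ((B : Finset G) : Set G) := by
      by_contra h
      push_neg at h
      have huniv : (Set.univ : Set G) ⊆
          ((Subgroup.closure ((B : Finset G) : Set G) : Subgroup G) : Set G) :=
        fun y _ => h y
      exact Set.infinite_univ (hHfin.subset huniv)
    refine ⟨insert x B, (Finset.card_insert_le _ _).trans (by omega), ?_⟩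
    set H := Subgroup.closure ((B : Finset G) : Set G) with hH
    set H' := Subgroup.closure (((insert x B : Finset G) : Set G)) with hH'
    have hle : H ≤ H' := Subgroup.closure_mono (by norm_num [Finset.coe_insert])
    have hxH' : x ∈ H' := Subgroup.subset_closure (by simp)
    have hsub : (H : Set G) ∪ (fun g => x * g) '' (H : Set G) ⊆ (H' : Set G) := by
      rintro y (hy | ⟨h, hh, rfl⟩)
      · exact hle hy
      · exact mul_mem hxH' (hle hh)
    have hdisj : Disjoint ((H : Set G)) ((fun g => x * g) '' (H : Set G)) := by
      rw [Set.disjoint_left]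
      rintro y hy ⟨h, hh, rfl⟩
      exact hx (by simpa using mul_mem hy (inv_mem hh) : x ∈ H)
    have himg : ((fun g => x * g) '' (H : Set G)).ncard = (H : Set G).ncard :=
      Set.ncard_image_of_injective _ (mul_right_injective x)
    have hfinH' : (H' : Set G).Finite := hLF _
    have hcup : ((H : Set G) ∪ (fun g => x * g) '' (H : Set G)).ncard
        = 2 * (H : Set G).ncard := by
      rw [Set.ncard_union_eq hdisj hHfin (hHfin.image _), himg]; ring
    calc 2 ^ (X + 1) = 2 * 2 ^ X := by ring
      _ ≤ 2 * (H : Set G).ncard := by omega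
      _ = ((H : Set G) ∪ (fun g => x * g) '' (H : Set G)).ncard := hcup.symm
      _ ≤ (H' : Set G).ncard := Set.ncard_le_ncard hsub hfinH'

private lemma aux_step [Infinite G] (hLF : LocallyFiniteGroup G) (e : ℕ → G) (n : ℕ)
    (P : Finset G) :
    ∃ Q : Finset G, P ⊆ Q ∧ (∀ a ∈ Q, a⁻¹ ∈ Q) ∧ e n ∈ Q ∧
      (1 + 2 * Q.card) ^ (n * ww n) <
        ((Subgroup.closure ((Q : Finset G) : Set G) : Subgroup G) : Set G).ncard := by
  classical
  obtain ⟨X, hX1, hXlt⟩ := aux_polyexp (4 * P.card + 5) (n * ww n)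
  obtain ⟨B, hBcard, hBle⟩ := aux_gen hLF X
  refine ⟨P ∪ P.image (·⁻¹) ∪ {e n, (e n)⁻¹} ∪ B ∪ B.image (·⁻¹),
    ?_, ?_, ?_, ?_⟩
  · intro a ha; simp [ha]
  · intro a ha
    simp only [Finset.mem_union, Finset.mem_image, Finset.mem_insert,
      Finset.mem_singleton] at ha ⊢
    rcases ha with ((((h | ⟨y, hy, rfl⟩) | (h | h)) | h) | ⟨y, hy, rfl⟩)
    · exact Or.inl (Or.inl (Or.inl (Or.inr ⟨a, h, rfl⟩)))
    · exact Or.inl (Or.inl (Or.inl (Or.inl (by simpa using hy))))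
    · exact Or.inl (Or.inl (Or.inr (Or.inr (by rw [h]))))
    · exact Or.inl (Or.inl (Or.inr (Or.inl (by rw [h, inv_inv]))))
    · exact Or.inr ⟨a, h, rfl⟩
    · exact Or.inl (Or.inr (by simpa using hy))
  · simp
  · have hcard : (P ∪ P.image (·⁻¹) ∪ {e n, (e n)⁻¹} ∪ B ∪ B.image (·⁻¹)).card
        ≤ 2 * P.card + 2 + 2 * X := by
      have h1 := Finset.card_union_le (P ∪ P.image (·⁻¹) ∪ {e n, (e n)⁻¹} ∪ B) (B.image (·⁻¹))
      have h2 := Finset.card_union_le (P ∪ P.image (·⁻¹) ∪ {e n, (e n)⁻¹}) B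
      have h3 := Finset.card_union_le (P ∪ P.image (·⁻¹)) ({e n, (e n)⁻¹} : Finset G)
      have h4 := Finset.card_union_le P (P.image (·⁻¹))
      have h5 : (P.image (·⁻¹)).card ≤ P.card := Finset.card_image_le
      have h6 : (B.image (·⁻¹)).card ≤ B.card := Finset.card_image_le
      have h7 : ({e n, (e n)⁻¹} : Finset G).card ≤ 2 := Finset.card_insert_le _ _ |>.trans (by simp)
      omega
    have hbase : (1 + 2 * (P ∪ P.image (·⁻¹) ∪ {e n, (e n)⁻¹} ∪ B ∪ B.image (·⁻¹)).card)
        ^ (n * ww n) ≤ (4 * P.card + 5 + 4 * X) ^ (n * ww n) :=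
      Nat.pow_le_pow_left (by omega) _
    have hclosmono : ((Subgroup.closure ((B : Finset G) : Set G) : Subgroup G) : Set G)
        ⊆ ((Subgroup.closure
          (((P ∪ P.image (·⁻¹) ∪ {e n, (e n)⁻¹} ∪ B ∪ B.image (·⁻¹) : Finset G)) : Set G)
            : Subgroup G) : Set G) := by
      apply Subgroup.closure_mono
      intro y hy
      simp only [Finset.coe_union, Set.mem_union]
      exact Or.inl (Or.inr (by simpa using hy))
    have hfin := hLF (P ∪ P.image (·⁻¹) ∪ {e n, (e n)⁻¹} ∪ B ∪ B.image (·⁻¹))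
    have hmono := Set.ncard_le_ncard hclosmono hfin
    calc (1 + 2 * (P ∪ P.image (·⁻¹) ∪ {e n, (e n)⁻¹} ∪ B ∪ B.image (·⁻¹)).card) ^ (n * ww n)
        ≤ (4 * P.card + 5 + 4 * X) ^ (n * ww n) := hbase
      _ < 2 ^ X := by
          have : 4 * P.card + 5 + 4 * X = 4 * P.card + 5 + 4 * X := rfl
          calc (4 * P.card + 5 + 4 * X) ^ (n * ww n)
              = ((4 * P.card + 5) + 4 * X) ^ (n * ww n) := by ring_nf
            _ < 2 ^ X := hXlt
      _ ≤ _ := hBle.trans hmono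

private lemma aux_seq [Infinite G] (hLF : LocallyFiniteGroup G) (e : ℕ → G) :
    ∃ Λ : ℕ → Finset G, (∀ n, Λ n ⊆ Λ (n + 1)) ∧ (∀ n, ∀ a ∈ Λ n, a⁻¹ ∈ Λ n) ∧
      (∀ n, e n ∈ Λ n) ∧ ∀ n, (1 + 2 * (Λ n).card) ^ (n * ww n) <
        ((Subgroup.closure ((Λ n : Finset G) : Set G) : Subgroup G) : Set G).ncard := by
  choose f hf1 hf2 hf3 hf4 using fun (n : ℕ) (P : Finset G) => aux_step hLF e n P
  refine ⟨fun n => Nat.rec (f 0 ∅) (fun k ih => f (k + 1) ih) n, fun n => hf1 (n + 1) _,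
    fun n => ?_, fun n => ?_, fun n => ?_⟩
  · cases n with
    | zero => exact hf2 0 ∅
    | succ k => exact hf2 (k + 1) _
  · cases n with
    | zero => exact hf3 0 ∅
    | succ k => exact hf3 (k + 1) _
  · cases n with
    | zero => exact hf4 0 ∅
    | succ k => exact hf4 (k + 1) _

private def wSet (Λ : ℕ → Finset G) (g : G) : Set ℕ :=
  {t | ∃ l : List (ℕ × G), (∀ p ∈ l, p.2 ∈ Λ p.1) ∧ (l.map Prod.snd).prod = g ∧
    (l.map fun p => ww p.1).sum = t}

private noncomputable def nrm (Λ : ℕ → Finset G) (g : G) : ℕ := sInf (wSet Λ g)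

section nrmLemmas

variable {Λ : ℕ → Finset G} {e : ℕ → G}

private lemma wSet_nonempty (hmem : ∀ n, e n ∈ Λ n) (hsurj : Function.Surjective e) (g : G) :
    (wSet Λ g).Nonempty := by
  obtain ⟨k, rfl⟩ := hsurj g
  exact ⟨ww k, [(k, e k)], by simpa using hmem k, by simp, by simp⟩

private lemma nrm_mem (hne : (wSet Λ g).Nonempty) : nrm Λ g ∈ wSet Λ g := Nat.sInf_mem hne

private lemma nrm_le {g : G} {t : ℕ} (ht : t ∈ wSet Λ g) : nrm Λ g ≤ t := Nat.sInf_le ht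

private lemma nrm_one : nrm Λ (1 : G) = 0 :=
  Nat.le_zero.mp (nrm_le ⟨[], by simp, by simp, by simp⟩)

private lemma nrm_mul_le (hmem : ∀ n, e n ∈ Λ n) (hsurj : Function.Surjective e) (g h : G) :
    nrm Λ (g * h) ≤ nrm Λ g + nrm Λ h := by
  obtain ⟨l₁, hl₁, hp₁, hs₁⟩ := nrm_mem (wSet_nonempty hmem hsurj g)
  obtain ⟨l₂, hl₂, hp₂, hs₂⟩ := nrm_mem (wSet_nonempty hmem hsurj h)
  refine nrm_le ⟨l₁ ++ l₂, ?_, ?_, ?_⟩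
  · intro p hp
    rcases List.mem_append.mp hp with h' | h'
    · exact hl₁ p h'
    · exact hl₂ p h'
  · rw [List.map_append, List.prod_append, hp₁, hp₂]
  · rw [List.map_append, List.sum_append, hs₁, hs₂]

private lemma nrm_inv (hsym : ∀ n, ∀ a ∈ Λ n, a⁻¹ ∈ Λ n)
    (hmem : ∀ n, e n ∈ Λ n) (hsurj : Function.Surjective e) (g : G) :
    nrm Λ g⁻¹ = nrm Λ g := by
  have key : ∀ x : G, nrm Λ x⁻¹ ≤ nrm Λ x := by
    intro x
    obtain ⟨l, hl, hp, hs⟩ := nrm_mem (wSet_nonempty hmem hsurj x)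
    refine nrm_le ⟨(l.map fun p => (p.1, p.2⁻¹)).reverse, ?_, ?_, ?_⟩
    · intro p hp'
      rw [List.mem_reverse] at hp'
      obtain ⟨q, hq, rfl⟩ := List.mem_map.mp hp'
      exact hsym _ _ (hl q hq)
    · rw [← hp, List.prod_inv_reverse]
      simp [Function.comp_def]
    · rw [List.map_reverse, List.sum_reverse, ← hs]
      simp [Function.comp_def]
  exact le_antisymm (key g) (by simpa using key g⁻¹)

private lemma nrm_eq_zero (hmem : ∀ n, e n ∈ Λ n) (hsurj : Function.Surjective e)
    {g : G} (h : nrm Λ g = 0) : g = 1 := by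
  obtain ⟨l, hl, hp, hs⟩ := nrm_mem (wSet_nonempty hmem hsurj g)
  rw [h] at hs
  have : l = [] := by
    cases l with
    | nil => rfl
    | cons p l' =>
      exfalso
      have h1 : 1 ≤ ww p.1 := (ww_ge p.1).trans' (by omega)
      simp only [List.map_cons, List.sum_cons] at hs
      omega
  rw [this] at hp
  simpa using hp.symm

private lemma nrm_le_of_mem {n : ℕ} {a : G} (ha : a ∈ Λ n) : nrm Λ a ≤ ww n :=
  nrm_le ⟨[(n, a)], by simpa using ha, by simp, by simp⟩

private lemma nrm_levels (hmem : ∀ n, e n ∈ Λ n) (hsurj : Function.Surjective e)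
    {g : G} {L : ℕ} (hg : nrm Λ g ≤ L) :
    ∃ l : List G, (∀ a ∈ l, ∃ m, ww m ≤ L ∧ a ∈ Λ m) ∧ l.prod = g ∧ l.length ≤ L := by
  obtain ⟨l, hl, hp, hs⟩ := nrm_mem (wSet_nonempty hmem hsurj g)
  refine ⟨l.map Prod.snd, ?_, hp, ?_⟩
  · intro a ha
    obtain ⟨q, hq, rfl⟩ := List.mem_map.mp ha
    refine ⟨q.1, ?_, hl q hq⟩
    calc ww q.1 ≤ (l.map fun p => ww p.1).sum :=
          List.single_le_sum (fun x _ => Nat.zero_le x) _ (List.mem_map.mpr ⟨q, hq, rfl⟩)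
      _ ≤ L := by omega
  · have h1 : (l.map Prod.snd).length = (l.map fun p => ww p.1).length := by simp
    have h2 : (l.map fun p => ww p.1).length ≤ (l.map fun p => ww p.1).sum := by
      apply List.length_le_sum_of_one_le
      intro i hi
      obtain ⟨q, _, rfl⟩ := List.mem_map.mp hi
      exact (ww_ge q.1).trans' (by omega)
    omega

end nrmLemmas

private lemma aux_main [Countable G] [Infinite G] (hLF : LocallyFiniteGroup G) :
    ∃ d : G → G → ℝ, IsPLIMetric d ∧ ¬ ANdimLE d 0 := by
  classical
  obtain ⟨e, he⟩ := exists_surjective_nat G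
  obtain ⟨Λ, hmono, hsym, hmem, hcard⟩ := aux_seq hLF e
  have hΛmono : ∀ {m n : ℕ}, m ≤ n → Λ m ⊆ Λ n := by
    intro m n h
    induction n with
    | zero => rw [Nat.le_zero.mp h]
    | succ k ih =>
      rcases Nat.lt_or_ge m (k + 1) with h' | h'
      · exact (ih (by omega)).trans (hmono k)
      · rw [le_antisymm h h']
  have hzero : ∀ g : G, nrm Λ g = 0 → g = 1 := fun g h => nrm_eq_zero hmem he h
  refine ⟨fun x y => (nrm Λ (x⁻¹ * y) : ℝ), ⟨?_, ?_, ?_, ?_, ?_⟩, ?_⟩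
  · -- definiteness
    intro x y
    rw [Nat.cast_eq_zero]
    constructor
    · intro h
      have h2 := hzero _ h
      rw [inv_mul_eq_one] at h2
      exact h2
    · rintro rfl
      simpa using nrm_one (Λ := Λ)
  · -- symmetry
    intro x y
    have h : y⁻¹ * x = (x⁻¹ * y)⁻¹ := by group
    show (nrm Λ (x⁻¹ * y) : ℝ) = (nrm Λ (y⁻¹ * x) : ℝ)
    rw [h, nrm_inv hsym hmem he]
  · -- triangle
    intro x y z
    have h1 : x⁻¹ * z = (x⁻¹ * y) * (y⁻¹ * z) := by group
    show (nrm Λ (x⁻¹ * z) : ℝ) ≤ (nrm Λ (x⁻¹ * y) : ℝ) + (nrm Λ (y⁻¹ * z) : ℝ)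
    rw [h1]
    exact_mod_cast nrm_mul_le hmem he _ _
  · -- left invariance
    intro g x y
    have h : (g * x)⁻¹ * (g * y) = x⁻¹ * y := by group
    show (nrm Λ ((g * x)⁻¹ * (g * y)) : ℝ) = (nrm Λ (x⁻¹ * y) : ℝ)
    rw [h]
  · -- properness
    intro K
    rcases lt_or_ge K 0 with hK | hK
    · convert Set.finite_empty
      rw [Set.eq_empty_iff_forall_notMem]
      intro g hg
      simp only [Set.mem_setOf_eq] at hg
      have : (0:ℝ) ≤ (nrm Λ (1⁻¹ * g) : ℝ) := Nat.cast_nonneg _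
      linarith
    · set L := ⌊K⌋₊ with hLdef
      apply (hLF (Λ L)).subset
      intro g hg
      simp only [Set.mem_setOf_eq, inv_one, one_mul] at hg
      have hgL : nrm Λ g ≤ L := Nat.le_floor hg
      obtain ⟨l, hl1, hl2, _⟩ := nrm_levels hmem he hgL
      rw [← hl2]
      apply Subgroup.list_prod_mem
      intro x hx
      obtain ⟨m, hm1, hm2⟩ := hl1 x hx
      have hmL : m ≤ L := le_trans (by omega) ((ww_ge m).trans hm1)
      exact Subgroup.subset_closure (hΛmono hmL hm2)
  · -- not ANdimLE 0
    rintro ⟨C, hC, b, hctrl⟩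
    obtain ⟨n, hn⟩ := exists_nat_gt (2 * C + |b| + 1)
    have hW1' : 1 ≤ ww n := by have := ww_ge n; omega
    have hW1 : (1:ℝ) ≤ (ww n : ℝ) := by exact_mod_cast hW1'
    set s : ℝ := (ww n : ℝ) + 1 / 2 with hsdef
    have hs : 0 < s := by rw [hsdef]; linarith
    obtain ⟨U, hcov, hU⟩ := hctrl s hs
    have hU0 : ∀ x : G, x ∈ U 0 := by
      intro x
      obtain ⟨j, hj⟩ := hcov x
      fin_cases j
      exact hj
    set L := n * ww n with hLdef
    -- every element of the L-ball has a short word over Λ n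
    have hwords : ∀ g : G, nrm Λ g ≤ L →
        ∃ l : List G, (∀ x ∈ l, x ∈ Λ n) ∧ l.prod = g ∧ l.length ≤ L := by
      intro g hg
      obtain ⟨l, hl1, hl2, hl3⟩ := nrm_levels hmem he hg
      refine ⟨l, ?_, hl2, hl3⟩
      intro x hx
      obtain ⟨m, hm1, hm2⟩ := hl1 x hx
      have hmn : m ≤ n := by
        by_contra h
        have h1 : ww (n + 1) ≤ ww m := ww_mono (by omega)
        have h2 := ww_lt_succ n
        omega
      exact hΛmono hmn hm2
    choose wit hw1 hw2 hw3 using hwords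
    -- the ball is small
    set Ball : Set G := {g : G | nrm Λ g ≤ L} with hBdef
    set φ : Ball → (Fin L → Option {x // x ∈ Λ n}) := fun g i =>
      if h : (i : ℕ) < (wit g.1 g.2).length then
        some ⟨(wit g.1 g.2).get ⟨(i : ℕ), h⟩, hw1 g.1 g.2 _ (List.get_mem _ _)⟩
      else none with hφdef
    have hφinj : Function.Injective φ := by
      intro g₁ g₂ hphi
      have hlen1 : (wit g₁.1 g₁.2).length ≤ L := hw3 _ _
      have hlen2 : (wit g₂.1 g₂.2).length ≤ L := hw3 _ _
      have hlen : (wit g₁.1 g₁.2).length = (wit g₂.1 g₂.2).length := by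
        by_contra hne
        rcases Nat.lt_or_ge (wit g₁.1 g₁.2).length (wit g₂.1 g₂.2).length with hlt | hge
        · have h0 := congrFun hphi ⟨(wit g₁.1 g₁.2).length, by omega⟩
          rw [hφdef] at h0
          simp only [dif_neg (lt_irrefl _), dif_pos hlt] at h0
          exact absurd h0 (by simp)
        · have hlt2 : (wit g₂.1 g₂.2).length < (wit g₁.1 g₁.2).length := by omega
          have h0 := congrFun hphi ⟨(wit g₂.1 g₂.2).length, by omega⟩
          rw [hφdef] at h0
          simp only [dif_neg (lt_irrefl _), dif_pos hlt2] at h0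
          exact absurd h0 (by simp)
      have hlists : wit g₁.1 g₁.2 = wit g₂.1 g₂.2 := by
        apply List.ext_getElem hlen
        intro i h1 h2
        have h0 := congrFun hphi ⟨i, by omega⟩
        rw [hφdef] at h0
        simp only [dif_pos h1, dif_pos h2] at h0
        have h0' := Option.some.inj h0
        have := congrArg Subtype.val h0'
        simpa [List.get_eq_getElem] using this
      apply Subtype.ext
      rw [← hw2 g₁.1 g₁.2, ← hw2 g₂.1 g₂.2, hlists]
    have hBallcard : Nat.card Ball ≤ ((Λ n).card + 1) ^ L := by
      have h1 := Nat.card_le_card_of_injective φ hφinj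
      have h2 : Nat.card (Fin L → Option {x // x ∈ Λ n}) = ((Λ n).card + 1) ^ L := by
        rw [Nat.card_eq_fintype_card, Fintype.card_fun, Fintype.card_option,
          Fintype.card_coe, Fintype.card_fin]
      exact h2 ▸ h1
    have hBallfin : Ball.Finite := by
      have : Finite Ball := Finite.of_injective φ hφinj
      exact Set.finite_coe_iff.mp this
    have hnotsub : ¬ (((Subgroup.closure ((Λ n : Finset G) : Set G) : Subgroup G) : Set G)
        ⊆ Ball) := by
      intro hsub
      have h2 := Set.ncard_le_ncard hsub hBallfin
      have h3 : Ball.ncard = Nat.card Ball := (Nat.card_coe_set_eq _).symm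
      have h4 : ((Λ n).card + 1) ^ L ≤ (1 + 2 * (Λ n).card) ^ L :=
        Nat.pow_le_pow_left (by omega) _
      have h5 := hcard n
      rw [← hLdef] at h5
      omega
    obtain ⟨gs, hgs, hgsBall⟩ := Set.not_subset.mp hnotsub
    have hgsL : L + 1 ≤ nrm Λ gs := by
      have : ¬ nrm Λ gs ≤ L := hgsBall
      omega
    -- a word for gs over Λ n
    have hgs' : gs ∈ Submonoid.closure ((Λ n : Finset G) : Set G) := by
      have h1 : gs ∈ (Subgroup.closure ((Λ n : Finset G) : Set G)).toSubmonoid := hgs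
      rw [Subgroup.closure_toSubmonoid] at h1
      refine Submonoid.closure_mono ?_ h1
      intro x hx
      rcases hx with hx | hx
      · exact hx
      · have hx' : x⁻¹ ∈ Λ n := hx
        simpa using hsym n x⁻¹ hx'
    obtain ⟨l, hlmem, hlprod⟩ := Submonoid.exists_list_of_mem_closure hgs'
    have hchain : ScaleChain (fun x y : G => (nrm Λ (x⁻¹ * y) : ℝ)) s (U 0) 1 gs := by
      refine ⟨l.length, fun i => (l.take i).prod, by simp,
        by show (l.take l.length).prod = gs; rw [List.take_length]; exact hlprod, fun i _ => hU0 _, ?_⟩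
      intro i hi
      have hstep : ((l.take i).prod)⁻¹ * (l.take (i + 1)).prod = l.get ⟨i, hi⟩ := by
        rw [List.prod_take_succ _ _ hi, List.get_eq_getElem]
        group
      show (nrm Λ (((l.take i).prod)⁻¹ * (l.take (i + 1)).prod) : ℝ) < s
      rw [hstep]
      have h1 : nrm Λ (l.get ⟨i, hi⟩) ≤ ww n :=
        nrm_le_of_mem (hlmem _ (List.get_mem _ _))
      rw [hsdef]
      have h2 : (nrm Λ (l.get ⟨i, hi⟩) : ℝ) ≤ (ww n : ℝ) := by exact_mod_cast h1
      linarith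
    have hle := hU 0 1 gs hchain
    simp only [inv_one, one_mul] at hle
    -- numeric contradiction
    have hLreal : ((L : ℕ) : ℝ) = (n : ℝ) * (ww n : ℝ) := by
      rw [hLdef]; push_cast; ring
    have hnrmreal : (n : ℝ) * (ww n : ℝ) + 1 ≤ (nrm Λ gs : ℝ) := by
      rw [← hLreal]
      exact_mod_cast hgsL
    have habs : b ≤ |b| := le_abs_self b
    have h1 : (2 * C + |b| + 1) * (ww n : ℝ) < (n : ℝ) * (ww n : ℝ) :=
      mul_lt_mul_of_pos_right hn (by linarith)
    have h2 : 0 ≤ C * ((ww n : ℝ) - 1) := mul_nonneg hC.le (by linarith)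
    have h3 : 0 ≤ |b| * ((ww n : ℝ) - 1) := mul_nonneg (abs_nonneg b) (by linarith)
    rw [hsdef] at hle
    nlinarith

end ANAux

/-- A countable locally finite group is finite if and only if it has asymptotic
Assouad-Nagata dimension `0` for every proper left invariant metric. -/
theorem finite_iff_asdimAN_zero_forall_metric {G : Type*} [Group G] [Countable G]
    (hLF : LocallyFiniteGroup G) :
    Finite G ↔ ∀ d : G → G → ℝ, IsPLIMetric d → ANdimLE d 0 := by
  constructor
  · intro hfin d hd
    obtain ⟨B, hB⟩ : ∃ B : ℝ, ∀ x y : G, d x y ≤ B := by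
      have hfr : (Set.range (Function.uncurry d)).Finite := Set.finite_range _
      obtain ⟨B, hB⟩ := hfr.bddAbove
      exact ⟨B, fun x y => hB ⟨(x, y), rfl⟩⟩
    refine ⟨1, one_pos, B, fun s hs => ⟨fun _ => Set.univ, fun x => ⟨0, trivial⟩, ?_⟩⟩
    intro i x y _
    have h1 := hB x y
    show d x y ≤ 1 * s + B
    linarith
  · intro h
    by_contra hnf
    have : Infinite G := not_finite_iff_infinite.mp hnf
    obtain ⟨d, hd, hna⟩ := aux_main hLF
    exact hna (h d hd)
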